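/- Let C be a nonempty closed convex subset of a real Hilbert space H. Then C has the contraction-extension property: for every subset N ⊆ C and every Lipschitz map f : N → C with Lipschitz constant L, there exists an extension F : C → C with F|_N = f and Lipschitz constant at most L. -/

import Mathlib

open Metric Set

open Finset Filter
open scoped RealInnerProductSpace Topology

section KirszbraunAux

variable {H : Type*} [NormedAddCommGroup H] [InnerProductSpace ℝ H] [CompleteSpace H]

lemma exists_proj_pt {K : Set H} (hne : K.Nonempty) (hK : IsClosed K) (hconv : Convex ℝ K)
    (p : H) : ∃ v ∈ K, (∀ w ∈ K, ‖p - v‖ ≤ ‖p - w‖) ∧ ∀ w ∈ K, (⟪p - v, w - v⟫) ≤ 0 := by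
  obtain ⟨v, hvK, hv⟩ := exists_norm_eq_iInf_of_complete_convex hne hK.isComplete hconv p
  haveI : Nonempty K := hne.to_subtype
  refine ⟨v, hvK, fun w hw => ?_, (norm_eq_iInf_iff_real_inner_le_zero hconv hvK).1 hv⟩
  rw [hv]
  exact ciInf_le ⟨0, Set.forall_mem_range.2 fun _ => norm_nonneg _⟩ (⟨w, hw⟩ : K)

lemma sum_inner_sq {ι : Type*} (s : Finset ι) (c : ι → ℝ) (u : ι → H) :
    ∑ i ∈ s, ∑ j ∈ s, c i * c j * ⟪u i, u j⟫ = ‖∑ i ∈ s, c i • u i‖ ^ 2 := by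
  rw [← real_inner_self_eq_norm_sq, sum_inner]
  refine Finset.sum_congr rfl fun i _ => ?_
  rw [inner_sum]
  refine Finset.sum_congr rfl fun j _ => ?_
  rw [real_inner_smul_left, real_inner_smul_right]; ring

set_option maxHeartbeats 3200000 in
lemma finite_one_point (L : ℝ) (hL : 0 ≤ L) (x : H) (T : Finset (H × H))
    (hT : ∀ e ∈ T, ∀ e' ∈ T, dist e.2 e'.2 ≤ L * dist e.1 e'.1) :
    ∃ y : H, ∀ e ∈ T, dist y e.2 ≤ L * dist x e.1 := by
  classical
  rcases T.eq_empty_or_nonempty with rfl | hTne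
  · exact ⟨0, by simp⟩
  set v : H × H → H → ℝ := fun e y => ‖y - e.2‖ ^ 2 - L ^ 2 * ‖x - e.1‖ ^ 2 with hv
  have hvcont : ∀ e : H × H, Continuous (fun y => v e y) := by
    intro e
    exact ((continuous_id.sub continuous_const).norm.pow 2).sub continuous_const
  set φ : H → ℝ := fun y => T.sup' hTne fun e => v e y with hφ
  have hφcont : Continuous φ := Continuous.finset_sup'_apply hTne fun e _ => hvcont e
  set K : Set H := convexHull ℝ (Prod.snd '' (T : Set (H × H))) with hK
  have hKcomp : IsCompact K := (T.finite_toSet.image _).isCompact_convexHull ℝ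
  have hKconv : Convex ℝ K := convex_convexHull _ _
  have hKne : K.Nonempty := by
    obtain ⟨e, he⟩ := hTne
    exact ⟨e.2, subset_convexHull _ _ ⟨e, he, rfl⟩⟩
  obtain ⟨y₀, hy₀K, hy₀min⟩ := hKcomp.exists_isMinOn hKne hφcont.continuousOn
  set m : ℝ := φ y₀ with hm
  have key : m ≤ 0 := by
    by_contra hmpos
    push_neg at hmpos
    -- active set
    set A : Finset (H × H) := T.filter (fun e => v e y₀ = m) with hA
    have hAsub : A ⊆ T := Finset.filter_subset _ _
    have hAne : A.Nonempty := by
      obtain ⟨e, heT, hem⟩ := Finset.exists_mem_eq_sup' hTne (fun e => v e y₀)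
      exact ⟨e, Finset.mem_filter.2 ⟨heT, hem.symm⟩⟩
    set D : Set H := convexHull ℝ (Prod.snd '' (A : Set (H × H))) with hD
    have hDK : D ⊆ K := convexHull_mono (Set.image_mono hAsub)
    have hDcomp : IsCompact D := (A.finite_toSet.image _).isCompact_convexHull ℝ
    have hDconv : Convex ℝ D := convex_convexHull _ _
    have hDne : D.Nonempty := by
      obtain ⟨e, he⟩ := hAne
      exact ⟨e.2, subset_convexHull _ _ ⟨e, he, rfl⟩⟩
    have hval_le : ∀ e ∈ T, v e y₀ ≤ m := fun e he => Finset.le_sup' (fun e => v e y₀) he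
    -- Step 1: y₀ ∈ D
    have hy₀D : y₀ ∈ D := by
      by_contra hy₀D
      obtain ⟨p, hpD, -, hproj⟩ := exists_proj_pt hDne hDcomp.isClosed hDconv y₀
      set u : H := y₀ - p with hu
      have hune : u ≠ 0 := sub_ne_zero.2 fun h => hy₀D (h ▸ hpD)
      have hupos : 0 < ‖u‖ ^ 2 := by
        have := norm_pos_iff.2 hune; positivity
      have hact : ∀ e ∈ A, ‖u‖ ^ 2 ≤ ⟪y₀ - e.2, u⟫ := by
        intro e he
        have h2 : (⟪u, e.2 - p⟫) ≤ 0 := hproj _ (subset_convexHull _ _ ⟨e, he, rfl⟩)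
        have h3 : (⟪u, y₀ - e.2⟫) = ‖u‖ ^ 2 - ⟪u, e.2 - p⟫ := by
          rw [← real_inner_self_eq_norm_sq, ← inner_sub_right]
          congr 1
          rw [hu]; abel
        rw [real_inner_comm]
        linarith
      -- choose the step size t
      have ht : ∃ t : ℝ, 0 < t ∧ t ≤ 1 ∧
          ∀ e ∈ T, v e y₀ ≠ m → v e y₀ + t * (2 * ‖u‖ * ‖y₀ - e.2‖ + ‖u‖ ^ 2) < m := by
        set Tin : Finset (H × H) := T.filter (fun e => v e y₀ ≠ m) with hTin
        rcases Tin.eq_empty_or_nonempty with hTe | hTinne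
        · refine ⟨1, one_pos, le_refl 1, fun e heT hne' => absurd ?_ (Finset.notMem_empty e)⟩
          rw [← hTe]; exact Finset.mem_filter.2 ⟨heT, hne'⟩
        · set ε : ℝ := m - Tin.sup' hTinne (fun e => v e y₀) with hε
          have hεpos : 0 < ε := by
            rw [hε, sub_pos, Finset.sup'_lt_iff]
            intro e he
            rw [hTin, Finset.mem_filter] at he
            exact lt_of_le_of_ne (hval_le e he.1) he.2
          set Mb : ℝ := Tin.sup' hTinne (fun e => ‖y₀ - e.2‖) with hMb
          have hMbnn : 0 ≤ Mb := by
            obtain ⟨e, he⟩ := hTinne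
            exact le_trans (norm_nonneg _) (Finset.le_sup' (fun e => ‖y₀ - e.2‖) he)
          set Den : ℝ := 2 * ‖u‖ * Mb + ‖u‖ ^ 2 with hDen
          have hDennn : 0 < Den := by
            have : 0 ≤ 2 * ‖u‖ * Mb := by positivity
            linarith
          set t : ℝ := min 1 (ε / (Den + ε)) with htdef
          refine ⟨t, lt_min one_pos (by positivity), min_le_left _ _,
            fun e heT hne' => ?_⟩
          have heTin : e ∈ Tin := Finset.mem_filter.2 ⟨heT, hne'⟩
          have h1 : v e y₀ ≤ m - ε := by
            rw [hε]
            have := Finset.le_sup' (fun e => v e y₀) heTin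
            linarith
          have h2 : 2 * ‖u‖ * ‖y₀ - e.2‖ + ‖u‖ ^ 2 ≤ Den := by
            have := Finset.le_sup' (fun e => ‖y₀ - e.2‖) heTin
            have h4 : 0 ≤ ‖u‖ := norm_nonneg _
            rw [hDen]; nlinarith
          have htle : t ≤ ε / (Den + ε) := min_le_right _ _
          have h5 : t * (2 * ‖u‖ * ‖y₀ - e.2‖ + ‖u‖ ^ 2) ≤ (ε / (Den + ε)) * Den := by
            apply mul_le_mul htle h2 (by positivity) (by positivity)
          have h6 : (ε / (Den + ε)) * Den < ε := by
            rw [div_mul_eq_mul_div, div_lt_iff₀ (by linarith)]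
            nlinarith
          linarith
      obtain ⟨t, htpos, htle1, htkey⟩ := ht
      -- the competitor point
      set yt : H := y₀ - t • u with hyt
      have hytK : yt ∈ K := by
        have : yt = (1 - t) • y₀ + t • p := by
          rw [hyt, hu, smul_sub, sub_smul, one_smul]; abel
        rw [this]
        exact hKconv hy₀K (hDK hpD) (by linarith) (le_of_lt htpos) (by ring)
      have hexp : ∀ e : H × H, v e yt =
          v e y₀ - 2 * t * ⟪y₀ - e.2, u⟫ + t ^ 2 * ‖u‖ ^ 2 := by
        intro e
        have h1 : yt - e.2 = (y₀ - e.2) - t • u := by rw [hyt]; abel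
        rw [hv]
        simp only
        rw [h1, norm_sub_sq_real, real_inner_smul_right, norm_smul, mul_pow]
        simp [abs_of_pos htpos]
        ring
      have hφyt : φ yt < m := by
        rw [hφ]
        rw [Finset.sup'_lt_iff]
        intro e heT
        rw [hexp e]
        by_cases hact' : v e y₀ = m
        · have h7 := hact e (Finset.mem_filter.2 ⟨heT, hact'⟩)
          have h8 : t ^ 2 * ‖u‖ ^ 2 ≤ t * ‖u‖ ^ 2 := by
            nlinarith [mul_nonneg (mul_nonneg htpos.le (sub_nonneg.2 htle1)) (sq_nonneg ‖u‖)]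
          nlinarith
        · have h9 := htkey e heT hact'
          have h10 : -(2 * t * ⟪y₀ - e.2, u⟫) ≤ 2 * t * (‖y₀ - e.2‖ * ‖u‖) := by
            have := abs_real_inner_le_norm (y₀ - e.2) u
            have h11 := neg_abs_le (⟪y₀ - e.2, u⟫)
            nlinarith
          have h8 : t ^ 2 * ‖u‖ ^ 2 ≤ t * ‖u‖ ^ 2 := by
            nlinarith [mul_nonneg (mul_nonneg htpos.le (sub_nonneg.2 htle1)) (sq_nonneg ‖u‖)]
          nlinarith
      rw [hm] at hφyt
      exact absurd (hy₀min hytK) (not_le.2 hφyt)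
    -- Step 2: y₀ ∈ D leads to contradiction via the Kirszbraun inequality
    rw [hD, ← Finset.coe_image, Finset.convexHull_eq] at hy₀D
    obtain ⟨w, hw0, hw1, hwc⟩ := hy₀D
    set s : Finset H := A.image Prod.snd with hs
    rw [Finset.centerMass_eq_of_sum_1 _ _ hw1] at hwc
    simp only [id] at hwc
    -- choice of a partner pair for each point of s
    have hgex : ∀ b : H, ∃ e : H × H, b ∈ s → e ∈ A ∧ e.2 = b := by
      intro b
      by_cases hb : b ∈ s
      · rw [hs, Finset.mem_image] at hb
        obtain ⟨e, he, hbe⟩ := hb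
        exact ⟨e, fun _ => ⟨he, hbe⟩⟩
      · exact ⟨(0, 0), fun h => absurd h hb⟩
    choose g hgA using hgex
    -- active equalities
    have hactive : ∀ b ∈ s, ‖b - y₀‖ ^ 2 = m + L ^ 2 * ‖x - (g b).1‖ ^ 2 := by
      intro b hb
      obtain ⟨hgb, hgb2⟩ := hgA b hb
      have := (Finset.mem_filter.1 hgb).2
      rw [hv] at this
      simp only at this
      rw [hgb2] at this
      rw [norm_sub_rev]
      linarith
    -- pairwise Lipschitz
    have hlip : ∀ b ∈ s, ∀ b' ∈ s, ‖b - b'‖ ≤ L * ‖(g b).1 - (g b').1‖ := by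
      intro b hb b' hb'
      obtain ⟨hgb, hgb2⟩ := hgA b hb
      obtain ⟨hgb', hgb2'⟩ := hgA b' hb'
      have := hT _ (hAsub hgb) _ (hAsub hgb')
      rw [dist_eq_norm, dist_eq_norm, hgb2, hgb2'] at this
      exact this
    clear_value v φ K m A D s
    -- termwise inequality
    have hterm : ∀ b ∈ s, ∀ b' ∈ s,
        m + L ^ 2 * ⟪x - (g b).1, x - (g b').1⟫ ≤ ⟪b - y₀, b' - y₀⟫ := by
      intro b hb b' hb'
      have h1 := hactive b hb
      have h2 := hactive b' hb'
      have h3 := hlip b hb b' hb'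
      have h4 : ‖b - b'‖ ^ 2 ≤ L ^ 2 * ‖(g b).1 - (g b').1‖ ^ 2 := by
        have h6 := mul_self_le_mul_self (norm_nonneg (b - b')) h3
        nlinarith [h6]
      have e1 : ‖(b - y₀) - (b' - y₀)‖ ^ 2
          = ‖b - y₀‖ ^ 2 - 2 * ⟪b - y₀, b' - y₀⟫ + ‖b' - y₀‖ ^ 2 := norm_sub_sq_real _ _
      have e2 : ‖(x - (g b).1) - (x - (g b').1)‖ ^ 2 = ‖x - (g b).1‖ ^ 2
          - 2 * ⟪x - (g b).1, x - (g b').1⟫ + ‖x - (g b').1‖ ^ 2 := norm_sub_sq_real _ _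
      have e3 : (b - y₀) - (b' - y₀) = b - b' := by abel
      have e4 : (x - (g b).1) - (x - (g b').1) = (g b').1 - (g b).1 := by abel
      rw [e3] at e1
      rw [e4, norm_sub_rev] at e2
      have e5 : L ^ 2 * ‖(g b).1 - (g b').1‖ ^ 2 = L ^ 2 * ‖x - (g b).1‖ ^ 2
          - 2 * (L ^ 2 * ⟪x - (g b).1, x - (g b').1⟫) + L ^ 2 * ‖x - (g b').1‖ ^ 2 := by
        rw [e2]; ring
      linarith
    -- the contradiction
    have hz : ∑ b ∈ s, w b • (b - y₀) = 0 := by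
      simp only [smul_sub, Finset.sum_sub_distrib, ← Finset.sum_smul, hw1, hwc, one_smul,
        sub_self]
    have hsum1 : ∑ b ∈ s, ∑ b' ∈ s, w b * w b' * ⟪b - y₀, b' - y₀⟫ = 0 := by
      rw [sum_inner_sq s w (fun b => b - y₀)]
      rw [hz]; simp
    have hsum2 : ∑ b ∈ s, ∑ b' ∈ s, w b * w b' * (m + L ^ 2 * ⟪x - (g b).1, x - (g b').1⟫)
        ≤ ∑ b ∈ s, ∑ b' ∈ s, w b * w b' * ⟪b - y₀, b' - y₀⟫ := by
      refine Finset.sum_le_sum fun b hb => Finset.sum_le_sum fun b' hb' => ?_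
      have hwnn : 0 ≤ w b * w b' := mul_nonneg (hw0 b hb) (hw0 b' hb')
      exact mul_le_mul_of_nonneg_left (hterm b hb b' hb') hwnn
    have hsplit : ∑ b ∈ s, ∑ b' ∈ s, w b * w b' * (m + L ^ 2 * ⟪x - (g b).1, x - (g b').1⟫)
        = (∑ b ∈ s, ∑ b' ∈ s, w b * w b' * m)
          + ∑ b ∈ s, ∑ b' ∈ s, L ^ 2 * (w b * w b' * ⟪x - (g b).1, x - (g b').1⟫) := by
      rw [← Finset.sum_add_distrib]
      refine Finset.sum_congr rfl fun b _ => ?_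
      rw [← Finset.sum_add_distrib]
      refine Finset.sum_congr rfl fun b' _ => by ring
    have e1 : ∑ b ∈ s, ∑ b' ∈ s, w b * w b' * m = m := by
      simp only [← Finset.sum_mul]
      rw [← Finset.sum_mul_sum, hw1, one_mul, one_mul]
    have e2 : ∑ b ∈ s, ∑ b' ∈ s, L ^ 2 * (w b * w b' * ⟪x - (g b).1, x - (g b').1⟫)
        = L ^ 2 * ‖∑ b ∈ s, w b • (x - (g b).1)‖ ^ 2 := by
      simp only [← Finset.mul_sum]
      rw [sum_inner_sq s w (fun b => x - (g b).1)]
    have hsum3 : ∑ b ∈ s, ∑ b' ∈ s, w b * w b' * (m + L ^ 2 * ⟪x - (g b).1, x - (g b').1⟫)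
        = m + L ^ 2 * ‖∑ b ∈ s, w b • (x - (g b).1)‖ ^ 2 := by
      rw [hsplit, e1, e2]
    have hnn : 0 ≤ L ^ 2 * ‖∑ b ∈ s, w b • (x - (g b).1)‖ ^ 2 := by positivity
    linarith
  -- conclusion from `m ≤ 0`
  refine ⟨y₀, fun e he => ?_⟩
  have h1 : v e y₀ ≤ m := Finset.le_sup' (fun e => v e y₀) he
  rw [hv] at h1
  simp only at h1
  rw [dist_eq_norm, dist_eq_norm]
  have h2 : ‖y₀ - e.2‖ ^ 2 ≤ (L * ‖x - e.1‖) ^ 2 := by nlinarith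
  have h3 : 0 ≤ L * ‖x - e.1‖ := by positivity
  exact (pow_le_pow_iff_left₀ (norm_nonneg _) h3 two_ne_zero).1 h2

set_option maxHeartbeats 1600000 in
lemma kirsz_one_point (L : ℝ) (hL : 0 ≤ L) (x : H) (M : Set (H × H))
    (hM : ∀ e ∈ M, ∀ e' ∈ M, dist e.2 e'.2 ≤ L * dist e.1 e'.1) :
    ∃ y : H, ∀ e ∈ M, dist y e.2 ≤ L * dist x e.1 := by
  classical
  rcases M.eq_empty_or_nonempty with rfl | ⟨e₀, he₀⟩
  · exact ⟨0, by simp⟩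
  set p : H := e₀.2 with hp
  -- index type: finite subsets of M containing e₀
  set ι : Type _ := {T : Finset (H × H) // ↑T ⊆ M ∧ e₀ ∈ T} with hι
  set K : ι → Set H := fun T => ⋂ e ∈ T.1, closedBall e.2 (L * dist x e.1) with hKdef
  have hmemK : ∀ (T : ι) (y : H), y ∈ K T ↔ ∀ e ∈ T.1, dist y e.2 ≤ L * dist x e.1 := by
    intro T y
    simp [hKdef, Set.mem_iInter, Metric.mem_closedBall]
  have hKne : ∀ T : ι, (K T).Nonempty := by
    intro T
    obtain ⟨y, hy⟩ := finite_one_point L hL x T.1 fun e he e' he' =>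
      hM e (T.2.1 he) e' (T.2.1 he')
    exact ⟨y, (hmemK T y).2 hy⟩
  have hKclosed : ∀ T : ι, IsClosed (K T) :=
    fun T => isClosed_iInter fun e => isClosed_iInter fun _ => Metric.isClosed_closedBall
  have hKconv : ∀ T : ι, Convex ℝ (K T) :=
    fun T => convex_iInter fun e => convex_iInter fun _ => convex_closedBall _ _
  have hproj : ∀ T : ι, ∃ vT, vT ∈ K T ∧ ∀ w ∈ K T, ‖p - vT‖ ≤ ‖p - w‖ := by
    intro T
    obtain ⟨vT, h1, h2, -⟩ := exists_proj_pt (hKne T) (hKclosed T) (hKconv T) p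
    exact ⟨vT, h1, h2⟩
  choose v hvmem hvmin using hproj
  set d : ι → ℝ := fun T => ‖p - v T‖ with hd
  have hd0 : ∀ T, 0 ≤ d T := fun T => norm_nonneg _
  have hdR : ∀ T, d T ≤ L * dist x e₀.1 := by
    intro T
    have h1 := (hmemK T (v T)).1 (hvmem T) e₀ T.2.2
    calc d T = dist (v T) p := by simp only [hd]; rw [dist_eq_norm, norm_sub_rev]
    _ ≤ L * dist x e₀.1 := h1
  -- the key parallelogram estimate
  have hkey : ∀ T₁ T₂ : ι, T₁.1 ⊆ T₂.1 → ‖v T₁ - v T₂‖ ^ 2 ≤ 2 * d T₂ ^ 2 - 2 * d T₁ ^ 2 := by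
    intro T₁ T₂ hsub
    have hK21 : K T₂ ⊆ K T₁ := by
      intro y hy
      exact (hmemK T₁ y).2 fun e he => (hmemK T₂ y).1 hy e (hsub he)
    have hv2 : v T₂ ∈ K T₁ := hK21 (hvmem T₂)
    set w : H := (2⁻¹ : ℝ) • (v T₁ + v T₂) with hw
    have hwK : w ∈ K T₁ := by
      have := (hKconv T₁) (hvmem T₁) hv2 (by norm_num : (0:ℝ) ≤ 2⁻¹)
        (by norm_num : (0:ℝ) ≤ 2⁻¹) (by norm_num)
      rwa [hw, smul_add]
    have h1 : d T₁ ≤ ‖p - w‖ := hvmin T₁ w hwK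
    have hpar := parallelogram_law_with_norm ℝ (p - v T₁) (p - v T₂)
    have e1 : (p - v T₁) + (p - v T₂) = (2 : ℝ) • (p - w) := by
      rw [hw]; module
    have e2 : (p - v T₁) - (p - v T₂) = v T₂ - v T₁ := by abel
    rw [e1, e2, norm_smul] at hpar
    simp only [Real.norm_ofNat] at hpar
    have h2 : ‖v T₁ - v T₂‖ = ‖v T₂ - v T₁‖ := norm_sub_rev _ _
    have h3 : (0:ℝ) ≤ ‖p - w‖ := norm_nonneg _
    have h1' : ‖p - v T₁‖ ≤ ‖p - w‖ := h1
    have h4 : ‖p - v T₁‖ ^ 2 ≤ ‖p - w‖ ^ 2 := by nlinarith [norm_nonneg (p - v T₁)]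
    simp only [hd]
    rw [h2]
    nlinarith [hpar, h4]
  have hmono : ∀ T₁ T₂ : ι, T₁.1 ⊆ T₂.1 → d T₁ ≤ d T₂ := by
    intro T₁ T₂ hsub
    have := hkey T₁ T₂ hsub
    nlinarith [sq_nonneg ‖v T₁ - v T₂‖, hd0 T₁, hd0 T₂]
  -- the supremum of the distances
  have hιne : Nonempty ι := ⟨⟨{e₀}, by simp [he₀], Finset.mem_singleton_self e₀⟩⟩
  set δ : ℝ := sSup (Set.range d) with hδ
  have hbdd : BddAbove (Set.range d) := ⟨L * dist x e₀.1, forall_mem_range.2 hdR⟩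
  have hrange_ne : (Set.range d).Nonempty := Set.range_nonempty d
  have hdδ : ∀ T, d T ≤ δ := fun T => le_csSup hbdd ⟨T, rfl⟩
  have hδ0 : 0 ≤ δ := le_trans (hd0 hιne.some) (hdδ hιne.some)
  -- approximating sequence
  have hseq : ∀ n : ℕ, ∃ T : ι, δ - 1 / (n + 1) < d T := by
    intro n
    have h1 : δ - 1 / (n + 1) < δ := by
      have : (0:ℝ) < 1 / (n + 1) := by positivity
      linarith
    obtain ⟨r, ⟨T, rfl⟩, hr⟩ := exists_lt_of_lt_csSup hrange_ne h1
    exact ⟨T, hr⟩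
  choose Tn hTn using hseq
  -- uniform estimate beyond T n
  have hc : ∀ (n : ℕ) (W : ι), (Tn n).1 ⊆ W.1 → ‖v (Tn n) - v W‖ ^ 2 ≤ 4 * δ / (n + 1) := by
    intro n W hsub
    have h1 := hkey (Tn n) W hsub
    have h2 := hTn n
    have h3 := hdδ W
    have h4 := hdδ (Tn n)
    have h5 := hd0 (Tn n)
    have h6 : (0:ℝ) < 1 / (n + 1) := by positivity
    have h7 : δ ^ 2 - d (Tn n) ^ 2 ≤ 2 * δ / (n + 1) := by
      have h8 : δ - d (Tn n) ≤ 1 / (n + 1) := by linarith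
      have h9 : δ + d (Tn n) ≤ 2 * δ := by linarith
      have h10 : 0 ≤ δ + d (Tn n) := by linarith
      calc δ ^ 2 - d (Tn n) ^ 2 = (δ - d (Tn n)) * (δ + d (Tn n)) := by ring
      _ ≤ (1 / (n + 1)) * (δ + d (Tn n)) := by
          rcases le_or_gt 0 (δ - d (Tn n)) with h | h
          · exact mul_le_mul_of_nonneg_right h8 h10
          · nlinarith
      _ ≤ (1 / (n + 1)) * (2 * δ) := by
          exact mul_le_mul_of_nonneg_left h9 (le_of_lt h6)
      _ = 2 * δ / (n + 1) := by ring
    have h11 : d W ^ 2 ≤ δ ^ 2 := by nlinarith [hd0 W]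
    calc ‖v (Tn n) - v W‖ ^ 2 ≤ 2 * d W ^ 2 - 2 * d (Tn n) ^ 2 := h1
    _ ≤ 2 * (δ ^ 2 - d (Tn n) ^ 2) := by linarith
    _ ≤ 2 * (2 * δ / (n + 1)) := by linarith
    _ = 4 * δ / (n + 1) := by ring
  -- the union of two indices
  have hUnion : ∀ T₁ T₂ : ι, ∃ U : ι, T₁.1 ⊆ U.1 ∧ T₂.1 ⊆ U.1 := by
    intro T₁ T₂
    refine ⟨⟨T₁.1 ∪ T₂.1, ?_, Finset.mem_union_left _ T₁.2.2⟩,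
      Finset.subset_union_left, Finset.subset_union_right⟩
    rw [Finset.coe_union]
    exact Set.union_subset T₁.2.1 T₂.2.1
  -- Cauchy
  have hsqrt : ∀ (n : ℕ) (W : ι), (Tn n).1 ⊆ W.1 →
      dist (v (Tn n)) (v W) ≤ Real.sqrt (4 * δ / (n + 1)) := by
    intro n W hsub
    rw [dist_eq_norm]
    have h1 := hc n W hsub
    have := Real.sqrt_le_sqrt h1
    rwa [Real.sqrt_sq (norm_nonneg _)] at this
  have hb_anti : ∀ N n : ℕ, N ≤ n → Real.sqrt (4 * δ / (n + 1)) ≤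
      Real.sqrt (4 * δ / (N + 1)) := by
    intro N n hNn
    apply Real.sqrt_le_sqrt
    apply div_le_div_of_nonneg_left (by linarith) (by positivity)
    exact_mod_cast by omega
  have hcauchy : CauchySeq (fun n => v (Tn n)) := by
    apply cauchySeq_of_le_tendsto_0 (fun N : ℕ => 2 * Real.sqrt (4 * δ / (N + 1)))
    · intro n m N hn hm
      obtain ⟨U, h1, h2⟩ := hUnion (Tn n) (Tn m)
      calc dist (v (Tn n)) (v (Tn m))
          ≤ dist (v (Tn n)) (v U) + dist (v U) (v (Tn m)) := dist_triangle _ _ _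
      _ ≤ Real.sqrt (4 * δ / (n + 1)) + Real.sqrt (4 * δ / (m + 1)) := by
          rw [dist_comm (v U)]
          exact add_le_add (hsqrt n U h1) (hsqrt m U h2)
      _ ≤ 2 * Real.sqrt (4 * δ / (N + 1)) := by
          have := hb_anti N n hn
          have := hb_anti N m hm
          linarith
    · have h1 : Tendsto (fun N : ℕ => 4 * δ / (N + 1)) atTop (𝓝 0) := by
        have := tendsto_one_div_add_atTop_nhds_zero_nat (𝕜 := ℝ)
        have h2 := this.const_mul (4 * δ)
        simpa [div_eq_mul_inv, mul_comm, mul_assoc, mul_left_comm] using h2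
      have h3 : Tendsto (fun N : ℕ => Real.sqrt (4 * δ / (N + 1))) atTop (𝓝 0) := by
        have := (Real.continuous_sqrt.tendsto 0).comp h1
        simpa [Function.comp_def] using this
      simpa using h3.const_mul 2
  obtain ⟨q, hq⟩ := cauchySeq_tendsto_of_complete hcauchy
  -- conclusion
  refine ⟨q, fun e he => ?_⟩
  -- enlarged indices
  set W : ℕ → ι := fun n => ⟨insert e (Tn n).1, by
    rw [Finset.coe_insert]
    exact Set.insert_subset he (Tn n).2.1, Finset.mem_insert_of_mem (Tn n).2.2⟩ with hW
  have hsubW : ∀ n, (Tn n).1 ⊆ (W n).1 := fun n => Finset.subset_insert _ _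
  have hWtendsto : Tendsto (fun n => v (W n)) atTop (𝓝 q) := by
    rw [tendsto_iff_dist_tendsto_zero]
    apply squeeze_zero (fun n => dist_nonneg)
      (g := fun n : ℕ => Real.sqrt (4 * δ / (n + 1)) + dist (v (Tn n)) q)
    · intro n
      calc dist (v (W n)) q ≤ dist (v (W n)) (v (Tn n)) + dist (v (Tn n)) q :=
            dist_triangle _ _ _
      _ ≤ Real.sqrt (4 * δ / (n + 1)) + dist (v (Tn n)) q := by
          rw [dist_comm]
          exact add_le_add_left (hsqrt n (W n) (hsubW n)) _
    · have h1 : Tendsto (fun N : ℕ => 4 * δ / (N + 1)) atTop (𝓝 0) := by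
        have := tendsto_one_div_add_atTop_nhds_zero_nat (𝕜 := ℝ)
        have h2 := this.const_mul (4 * δ)
        simpa [div_eq_mul_inv, mul_comm, mul_assoc, mul_left_comm] using h2
      have h3 : Tendsto (fun N : ℕ => Real.sqrt (4 * δ / (N + 1))) atTop (𝓝 0) := by
        have := (Real.continuous_sqrt.tendsto 0).comp h1
        simpa [Function.comp_def] using this
      have h4 : Tendsto (fun n => dist (v (Tn n)) q) atTop (𝓝 0) :=
        tendsto_iff_dist_tendsto_zero.1 hq
      simpa using h3.add h4
  have hmemball : ∀ n, v (W n) ∈ closedBall e.2 (L * dist x e.1) := by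
    intro n
    rw [Metric.mem_closedBall]
    exact (hmemK (W n) (v (W n))).1 (hvmem (W n)) e (Finset.mem_insert_self _ _)
  have hqmem : q ∈ closedBall e.2 (L * dist x e.1) :=
    Metric.isClosed_closedBall.mem_of_tendsto hWtendsto (Filter.Eventually.of_forall hmemball)
  exact Metric.mem_closedBall.1 hqmem

end KirszbraunAux

theorem stmt7 {H : Type*} [NormedAddCommGroup H] [InnerProductSpace ℝ H] [CompleteSpace H]
    (C : Set H) (hC : Convex ℝ C) (hclosed : IsClosed C) (hne : C.Nonempty)
    (N : Set H) (hN : N ⊆ C) (f : H → H) (hfC : ∀ a ∈ N, f a ∈ C)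
    (L : ℝ) (hL : 0 ≤ L) (hf : ∀ a ∈ N, ∀ b ∈ N, dist (f a) (f b) ≤ L * dist a b) :
    ∃ F : H → H, (∀ a ∈ N, F a = f a) ∧ (∀ a ∈ C, F a ∈ C) ∧
      ∀ a ∈ C, ∀ b ∈ C, dist (F a) (F b) ≤ L * dist a b := by
  classical
  set G₀ : Set (H × H) := (fun a => (a, f a)) '' N with hG0
  set 𝒢 : Set (Set (H × H)) :=
    {G | G₀ ⊆ G ∧ ∀ e ∈ G, ∀ e' ∈ G, dist e.2 e'.2 ≤ L * dist e.1 e'.1} with h𝒢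
  have hG0mem : G₀ ∈ 𝒢 := by
    refine ⟨subset_rfl, ?_⟩
    rintro e ⟨a, ha, rfl⟩ e' ⟨b, hb, rfl⟩
    exact hf a ha b hb
  have hchain : ∀ c ⊆ 𝒢, IsChain (· ⊆ ·) c → c.Nonempty → ∃ ub ∈ 𝒢, ∀ s ∈ c, s ⊆ ub := by
    intro c hc hchain hcne
    refine ⟨⋃₀ c, ⟨?_, ?_⟩, fun s hs => subset_sUnion_of_mem hs⟩
    · obtain ⟨s, hs⟩ := hcne
      exact subset_trans (hc hs).1 (subset_sUnion_of_mem hs)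
    · rintro e ⟨s, hs, hes⟩ e' ⟨s', hs', hes'⟩
      rcases hchain.total hs hs' with h | h
      · exact (hc hs').2 e (h hes) e' hes'
      · exact (hc hs).2 e hes e' (h hes')
  obtain ⟨M, hG0M, hMmem, hMmax⟩ := zorn_subset_nonempty 𝒢 hchain G₀ hG0mem
  have hMlip : ∀ e ∈ M, ∀ e' ∈ M, dist e.2 e'.2 ≤ L * dist e.1 e'.1 := hMmem.2
  -- maximal graph is total
  have htot : ∀ z : H, ∃ y, (z, y) ∈ M := by
    intro z
    by_contra h
    push_neg at h
    obtain ⟨y, hy⟩ := kirsz_one_point L hL z M hMlip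
    have hmem : insert (z, y) M ∈ 𝒢 := by
      refine ⟨subset_trans hG0M (Set.subset_insert _ _), ?_⟩
      rintro e (rfl | he) e' (rfl | he')
      · simp [mul_nonneg hL dist_nonneg]
      · exact hy e' he'
      · rw [dist_comm, dist_comm e.1 z]
        exact hy e he
      · exact hMlip e he e' he'
    have hsub : M ⊆ insert (z, y) M := Set.subset_insert _ _
    have := hMmax hmem hsub
    exact h y (this (Set.mem_insert _ _))
  choose g hg using htot
  have hglip : ∀ a b : H, dist (g a) (g b) ≤ L * dist a b :=
    fun a b => hMlip _ (hg a) _ (hg b)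
  have hgN : ∀ a ∈ N, g a = f a := by
    intro a ha
    have h1 : (a, f a) ∈ M := hG0M ⟨a, ha, rfl⟩
    have h2 := hMlip _ (hg a) _ h1
    simp only [dist_self, mul_zero] at h2
    exact dist_le_zero.1 h2
  -- metric projection onto C
  have hrex : ∀ z : H, ∃ rz, rz ∈ C ∧ (∀ w ∈ C, ‖z - rz‖ ≤ ‖z - w‖) ∧
      ∀ w ∈ C, (⟪z - rz, w - rz⟫) ≤ 0 := fun z => exists_proj_pt hne hclosed hC z
  choose r hrC hrmin hrvar using hrex
  have hrfix : ∀ a ∈ C, r a = a := by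
    intro a ha
    have h1 := hrmin a a ha
    simp only [sub_self, norm_zero] at h1
    have h2 : a - r a = 0 := norm_le_zero_iff.1 h1
    have := sub_eq_zero.1 h2
    exact this.symm
  have hrlip : ∀ z w : H, ‖r z - r w‖ ≤ ‖z - w‖ := by
    intro z w
    have h1 : (⟪z - r z, r w - r z⟫) ≤ 0 := hrvar z (r w) (hrC w)
    have h2 : (⟪w - r w, r z - r w⟫) ≤ 0 := hrvar w (r z) (hrC z)
    have h3 : ‖r z - r w‖ ^ 2 ≤ ⟪z - w, r z - r w⟫ := by
      have e1 : ‖r z - r w‖ ^ 2 = ⟪z - w, r z - r w⟫ + ⟪r z - z, r z - r w⟫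
          + ⟪w - r w, r z - r w⟫ := by
        rw [← real_inner_self_eq_norm_sq, ← inner_add_left, ← inner_add_left]
        congr 1
        abel
      have e2 : (⟪r z - z, r z - r w⟫) ≤ 0 := by
        have h4 : (⟪r z - z, r z - r w⟫) = ⟪z - r z, r w - r z⟫ := by
          rw [← inner_neg_neg]
          congr 1 <;> abel
        rw [h4]; exact h1
      linarith
    have h4 : (⟪z - w, r z - r w⟫) ≤ ‖z - w‖ * ‖r z - r w‖ := real_inner_le_norm _ _
    nlinarith [norm_nonneg (r z - r w), norm_nonneg (z - w)]
  refine ⟨fun a => r (g a), ?_, fun a _ => hrC (g a), ?_⟩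
  · intro a ha
    show r (g a) = f a
    rw [hgN a ha, hrfix (f a) (hfC a ha)]
  · intro a _ b _
    show dist (r (g a)) (r (g b)) ≤ L * dist a b
    calc dist (r (g a)) (r (g b)) = ‖r (g a) - r (g b)‖ := dist_eq_norm _ _
    _ ≤ ‖g a - g b‖ := hrlip _ _
    _ = dist (g a) (g b) := (dist_eq_norm _ _).symm
    _ ≤ L * dist a b := hglip a b
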